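/- Let t ≥ 0 and let U be a finite set with |U| ≥ 5t. Suppose A_1,...,A_5 are subsets of U with |A_i| ≤ 2t and A_i ∩ A_{i+2} = ∅ for all i (indices mod 5). Then there exist sets A_1',...,A_5' with A_i ⊆ A_i' ⊆ U, |A_i'| ≤ 2t, A_i' ∩ A_{i+2}' = ∅ for all i, and there exists an index i with |A_i'| = |A_{i+2}'| = 2t. -/

import Mathlib

section Pieces

lemma fin5_norm (j : Fin 5) : (j+1+1 = j+2 ∧ j+2+1 = j+3 ∧ j+3+1 = j+4 ∧ j+4+1 = j)
    ∧ (j+1+2 = j+3 ∧ j+2+2 = j+4 ∧ j+3+2 = j ∧ j+4+2 = j+1)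
    ∧ (j+1+3 = j+4 ∧ j+2+3 = j ∧ j+3+3 = j+1 ∧ j+4+3 = j+2)
    ∧ (j+1+4 = j ∧ j+2+4 = j+1 ∧ j+3+4 = j+2 ∧ j+4+4 = j+3) := by
  simp only [add_assoc,
    show (1+1:Fin 5)=2 by decide, show (2+1:Fin 5)=3 by decide,
    show (3+1:Fin 5)=4 by decide, show (4+1:Fin 5)=0 by decide,
    show (1+2:Fin 5)=3 by decide, show (2+2:Fin 5)=4 by decide,
    show (3+2:Fin 5)=0 by decide, show (4+2:Fin 5)=1 by decide,
    show (1+3:Fin 5)=4 by decide, show (2+3:Fin 5)=0 by decide,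
    show (3+3:Fin 5)=1 by decide, show (4+3:Fin 5)=2 by decide,
    show (1+4:Fin 5)=0 by decide, show (2+4:Fin 5)=1 by decide,
    show (3+4:Fin 5)=2 by decide, show (4+4:Fin 5)=3 by decide,
    add_zero, and_self, true_and, and_true]

end Pieces

section Sel
variable {t u : ℕ} {a f g : Fin 5 → ℕ}

variable (h1 : ∀ j, a j ≤ 2*t) (h2 : ∀ j, a j + a (j+1) = f j + g j)
    (h3 : ∀ j, f j + f (j+2) ≤ u + g (j+1)) (h4 : ∀ j, g j + g (j+1) ≤ a (j+1))
    (h5 : 5*t ≤ u)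

include h1 h2 h3 h4 h5

-- L3: adjacent bad-F pair forces good G at +3
lemma sel_L3 (j : Fin 5)
    (hf0 : u < 2*t + f j) (hf1 : u < 2*t + f (j+1)) : 4*t + g (j+3) ≤ u := by
  obtain ⟨⟨n11, n21, -⟩, -⟩ := fin5_norm j
  have e1 := h2 (j+1); have e2 := h2 (j+2)
  have e3 := h4 (j+2); have e4 := h3 j
  have e5 := h1 (j+1)
  rw [n11] at e1; rw [n21] at e2 e3
  omega

-- L5: no three consecutive bad F
lemma sel_L5 (j : Fin 5)
    (hf0 : u < 2*t + f j) (hf1 : u < 2*t + f (j+1)) (hf2 : u < 2*t + f (j+2)) : False := by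
  obtain ⟨⟨n11, -⟩, -⟩ := fin5_norm j
  have c := h3 j
  have e := h2 (j+1)
  rw [n11] at e
  have b1 := h1 (j+1); have b2 := h1 (j+2)
  omega

-- main selection
lemma sel_main :
    ∃ j : Fin 5, 4*t + g j ≤ u ∧ 2*t + f (j+1) ≤ u ∧ 2*t + f (j+4) ≤ u := by
  -- L1: not both adjacent g bad
  have L1 : ∀ j : Fin 5, u < 4*t + g j → 4*t + g (j+1) ≤ u := by
    intro j hj
    have := h4 j; have := h1 (j+1); omega
  by_cases hadj : ∃ j : Fin 5, u < 2*t + f j ∧ u < 2*t + f (j+1)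
  · obtain ⟨j, hf0, hf1⟩ := hadj
    refine ⟨j+3, sel_L3 h1 h2 h3 h4 h5 j hf0 hf1, ?_, ?_⟩
    · -- f (j+3+1) = f(j+4) = f(j-1) good, else (j+4,j,j+1) three consecutive
      obtain ⟨⟨-,-,n31,n41⟩, ⟨-,-,-,n42⟩, -, -⟩ := fin5_norm j
      rw [n31]
      by_contra hbad
      exact sel_L5 h1 h2 h3 h4 h5 (j+4) (by omega) (by rw [n41]; exact hf0)
        (by rw [n42]; exact hf1)
    · -- f (j+3+4) = f(j+2) good else (j,j+1,j+2) consecutive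
      obtain ⟨-, -, -, ⟨-,-,n34,-⟩⟩ := fin5_norm j
      rw [n34]
      by_contra hbad
      exact sel_L5 h1 h2 h3 h4 h5 j hf0 hf1 (by omega)
  · push_neg at hadj
    by_cases hd2 : ∃ j : Fin 5, u < 2*t + f j ∧ u < 2*t + f (j+2)
    · obtain ⟨j, hf0, hf2⟩ := hd2
      obtain ⟨⟨n11,-,-,n41⟩, -⟩ := fin5_norm j
      -- G(j+1) bad via h3, so G(j) good via L1 "reverse": L1 says BG j → good (j+1).
      -- need: good G j. Suppose u < 4t + g j; then L1 j gives 4t+g(j+1) ≤ u; but h3 j forces g(j+1) big.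
      have hg1 : u < 4*t + g (j+1) := by have := h3 j; omega
      have hgj : 4*t + g j ≤ u := by
        by_contra hb
        have := L1 j (by omega); omega
      refine ⟨j, hgj, ?_, ?_⟩
      · -- f(j+1) good: else adjacent pair (j, j+1)
        by_contra hb; exact absurd (hadj j hf0) (by omega)
      · -- f(j+4) good: else pair (j+4, j+4+1 = j) adjacent
        by_contra hb
        exact absurd (hadj (j+4) (by omega)) (by rw [n41]; omega)
    · push_neg at hd2
      by_cases hone : ∃ k : Fin 5, u < 2*t + f k
      · obtain ⟨k, hk⟩ := hone
        obtain ⟨⟨n11,n21,n31,n41⟩, ⟨n12,n22,n32,n42⟩, ⟨n13,n23,n33,n43⟩, ⟨n14,n24,n34,n44⟩⟩ := fin5_norm k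
        by_cases hg2 : 4*t + g (k+2) ≤ u
        · -- candidate k+2: need f(k+3) good and f(k+1)... f(k+2+1)=f(k+3), f(k+2+4)=f(k+1)
          refine ⟨k+2, hg2, ?_, ?_⟩
          · rw [n21]
            by_contra hb
            -- BF(k+3) ∧ BF(k+3+2 = k), contradicting hd2 (k+3)
            exact absurd (hd2 (k+3) (by omega)) (by rw [n32]; omega)
          · rw [n24]
            by_contra hb
            exact absurd (hadj k hk) (by omega)
        · -- G(k+2) bad ⇒ G(k+3) good by L1; candidate k+3: f(k+4), f(k+2) must be good
          have hg3 := L1 (k+2) (by omega)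
          rw [n21] at hg3
          refine ⟨k+3, hg3, ?_, ?_⟩
          · rw [n31]
            by_contra hb
            exact absurd (hadj (k+4) (by omega)) (by rw [n41]; omega)
          · rw [n34]
            by_contra hb
            exact absurd (hd2 k hk) (by omega)
      · push_neg at hone
        by_cases hg0 : 4*t + g 0 ≤ u
        · exact ⟨0, hg0, by have := hone (0+1); omega, by have := hone (0+4); omega⟩
        · have := L1 0 (by omega)
          exact ⟨1, by simpa using this, by have := hone (1+1); omega, by have := hone (1+4); omega⟩
end Sel



lemma extend_pair {U : Type*} [DecidableEq U] [Fintype U] (n : ℕ) (B₀ C₀ D E : Finset U)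
    (hBD : Disjoint B₀ D) (hCE : Disjoint C₀ E) (hBC : Disjoint B₀ C₀)
    (hB : B₀.card ≤ n) (hC : C₀.card ≤ n)
    (h1 : n + (D ∪ C₀).card ≤ Fintype.card U)
    (h2 : n + (E ∪ B₀).card ≤ Fintype.card U)
    (h3 : n + n + (D ∩ E).card ≤ Fintype.card U) :
    ∃ B C : Finset U, B₀ ⊆ B ∧ C₀ ⊆ C ∧ Disjoint B C ∧ Disjoint B D ∧ Disjoint C E ∧
      B.card = n ∧ C.card = n := by
  classical
  set R : Finset U := B₀ ∪ C₀ with hR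
  set Q1 : Finset U := E \ (D ∪ R) with hQ1
  set Q2 : Finset U := D \ (E ∪ R) with hQ2
  set Q3 : Finset U := Finset.univ \ (D ∪ E ∪ R) with hQ3
  have memQ1 : ∀ x ∈ Q1, x ∈ E ∧ x ∉ D ∧ x ∉ B₀ ∧ x ∉ C₀ := by
    intro x hx; simp [hQ1, hR] at hx; tauto
  have memQ2 : ∀ x ∈ Q2, x ∈ D ∧ x ∉ E ∧ x ∉ B₀ ∧ x ∉ C₀ := by
    intro x hx; simp [hQ2, hR] at hx; tauto
  have memQ3 : ∀ x ∈ Q3, x ∉ D ∧ x ∉ E ∧ x ∉ B₀ ∧ x ∉ C₀ := by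
    intro x hx; simp [hQ3, hR] at hx; tauto
  -- card counts
  have hcard1 : n ≤ Q1.card + Q3.card + B₀.card := by
    have e1 : Q1 ∪ Q3 = Finset.univ \ ((D ∪ C₀) ∪ B₀) := by
      ext x
      simp only [hQ1, hQ3, hR, Finset.mem_union, Finset.mem_sdiff, Finset.mem_univ, true_and]
      tauto
    have e2 : Disjoint Q1 Q3 := by
      rw [Finset.disjoint_left]; intro x hx1 hx3
      exact (memQ3 x hx3).2.1 (memQ1 x hx1).1
    have e3 : Disjoint (D ∪ C₀) B₀ := by
      rw [Finset.disjoint_union_left]; exact ⟨hBD.symm, hBC.symm⟩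
    have e4 : (Q1 ∪ Q3).card = Fintype.card U - ((D ∪ C₀).card + B₀.card) := by
      rw [e1, Finset.card_sdiff_of_subset (Finset.subset_univ _), Finset.card_univ,
        Finset.card_union_of_disjoint e3]
    rw [Finset.card_union_of_disjoint e2] at e4
    have : (D ∪ C₀).card + B₀.card ≤ Fintype.card U :=
      le_trans (by rw [← Finset.card_union_of_disjoint e3]; exact Finset.card_le_univ _)
        (le_of_eq Finset.card_univ)
    omega
  have hcard2 : n ≤ Q2.card + Q3.card + C₀.card := by
    have e1 : Q2 ∪ Q3 = Finset.univ \ ((E ∪ B₀) ∪ C₀) := by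
      ext x
      simp only [hQ2, hQ3, hR, Finset.mem_union, Finset.mem_sdiff, Finset.mem_univ, true_and]
      tauto
    have e2 : Disjoint Q2 Q3 := by
      rw [Finset.disjoint_left]; intro x hx1 hx3
      exact (memQ3 x hx3).1 (memQ2 x hx1).1
    have e3 : Disjoint (E ∪ B₀) C₀ := by
      rw [Finset.disjoint_union_left]; exact ⟨hCE.symm, hBC⟩
    have e4 : (Q2 ∪ Q3).card = Fintype.card U - ((E ∪ B₀).card + C₀.card) := by
      rw [e1, Finset.card_sdiff_of_subset (Finset.subset_univ _), Finset.card_univ,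
        Finset.card_union_of_disjoint e3]
    rw [Finset.card_union_of_disjoint e2] at e4
    have : (E ∪ B₀).card + C₀.card ≤ Fintype.card U :=
      le_trans (by rw [← Finset.card_union_of_disjoint e3]; exact Finset.card_le_univ _)
        (le_of_eq Finset.card_univ)
    omega
  have hcard3 : n + n ≤ Q1.card + Q2.card + Q3.card + B₀.card + C₀.card := by
    have e1 : Q1 ∪ Q2 ∪ Q3 = Finset.univ \ (((D ∩ E) ∪ B₀) ∪ C₀) := by
      ext x
      simp only [hQ1, hQ2, hQ3, hR, Finset.mem_union, Finset.mem_sdiff, Finset.mem_inter,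
        Finset.mem_univ, true_and]
      tauto
    have e12 : Disjoint Q1 Q2 := by
      rw [Finset.disjoint_left]; intro x hx1 hx2
      exact (memQ1 x hx1).2.1 (memQ2 x hx2).1
    have e13 : Disjoint Q1 Q3 := by
      rw [Finset.disjoint_left]; intro x hx1 hx3
      exact (memQ3 x hx3).2.1 (memQ1 x hx1).1
    have e23 : Disjoint Q2 Q3 := by
      rw [Finset.disjoint_left]; intro x hx1 hx3
      exact (memQ3 x hx3).1 (memQ2 x hx1).1
    have eDB : Disjoint (D ∩ E) B₀ := Disjoint.mono_left Finset.inter_subset_left hBD.symm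
    have eDC : Disjoint ((D ∩ E) ∪ B₀) C₀ := by
      rw [Finset.disjoint_union_left]
      exact ⟨Disjoint.mono_left Finset.inter_subset_right hCE.symm, hBC⟩
    have e4 : (Q1 ∪ Q2 ∪ Q3).card = Fintype.card U - ((D ∩ E).card + B₀.card + C₀.card) := by
      rw [e1, Finset.card_sdiff_of_subset (Finset.subset_univ _), Finset.card_univ,
        Finset.card_union_of_disjoint eDC, Finset.card_union_of_disjoint eDB]
    rw [Finset.card_union_of_disjoint (Finset.disjoint_union_left.mpr ⟨e13, e23⟩),
      Finset.card_union_of_disjoint e12] at e4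
    have : (D ∩ E).card + B₀.card + C₀.card ≤ Fintype.card U := by
      rw [← Finset.card_union_of_disjoint eDB, ← Finset.card_union_of_disjoint eDC]
      exact le_trans (Finset.card_le_univ _) (le_of_eq Finset.card_univ)
    omega
  -- choose pieces
  set a : ℕ := n - B₀.card with ha
  set b : ℕ := n - C₀.card with hb
  obtain ⟨T1, hT1sub, hT1card⟩ := Finset.exists_subset_card_eq (s := Q1) (n := min a Q1.card) (min_le_right _ _)
  obtain ⟨T1', hT1'sub, hT1'card⟩ := Finset.exists_subset_card_eq (s := Q3) (n := a - min a Q1.card)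
    (by omega)
  obtain ⟨T2, hT2sub, hT2card⟩ := Finset.exists_subset_card_eq (s := Q2) (n := min b Q2.card) (min_le_right _ _)
  obtain ⟨T2', hT2'sub, hT2'card⟩ := Finset.exists_subset_card_eq (s := Q3 \ T1') (n := b - min b Q2.card)
    (by rw [Finset.card_sdiff_of_subset hT1'sub]; omega)
  refine ⟨B₀ ∪ T1 ∪ T1', C₀ ∪ T2 ∪ T2', ?_, ?_, ?_, ?_, ?_, ?_, ?_⟩
  · exact Finset.subset_union_left.trans Finset.subset_union_left
  · exact Finset.subset_union_left.trans Finset.subset_union_left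
  · -- Disjoint B C
    have hT2'Q3 : T2' ⊆ Q3 := hT2'sub.trans Finset.sdiff_subset
    rw [Finset.disjoint_left]
    intro x hx hxc
    simp only [Finset.mem_union] at hx hxc
    rcases hx with (hx | hx) | hx <;> rcases hxc with (hc | hc) | hc
    · exact Finset.disjoint_left.mp hBC hx hc
    · exact (memQ2 x (hT2sub hc)).2.2.1 hx
    · exact (memQ3 x (hT2'Q3 hc)).2.2.1 hx
    · exact (memQ1 x (hT1sub hx)).2.2.2 hc
    · exact (memQ1 x (hT1sub hx)).2.1 (memQ2 x (hT2sub hc)).1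
    · exact (memQ3 x (hT2'Q3 hc)).2.1 (memQ1 x (hT1sub hx)).1
    · exact (memQ3 x (hT1'sub hx)).2.2.2 hc
    · exact (memQ3 x (hT1'sub hx)).1 (memQ2 x (hT2sub hc)).1
    · exact (Finset.mem_sdiff.mp (hT2'sub hc)).2 hx
  · -- Disjoint B D
    rw [Finset.disjoint_left]
    intro x hx hxd
    simp only [Finset.mem_union] at hx
    rcases hx with (hx | hx) | hx
    · exact Finset.disjoint_left.mp hBD hx hxd
    · exact (memQ1 x (hT1sub hx)).2.1 hxd
    · exact (memQ3 x (hT1'sub hx)).1 hxd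
  · -- Disjoint C E
    have hT2'Q3 : T2' ⊆ Q3 := hT2'sub.trans Finset.sdiff_subset
    rw [Finset.disjoint_left]
    intro x hx hxe
    simp only [Finset.mem_union] at hx
    rcases hx with (hx | hx) | hx
    · exact Finset.disjoint_left.mp hCE hx hxe
    · exact (memQ2 x (hT2sub hx)).2.1 hxe
    · exact (memQ3 x (hT2'Q3 hx)).2.1 hxe
  · -- card B = n
    have d1 : Disjoint B₀ T1 := by
      rw [Finset.disjoint_left]; intro x hx hx1
      exact (memQ1 x (hT1sub hx1)).2.2.1 hx
    have d2 : Disjoint (B₀ ∪ T1) T1' := by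
      rw [Finset.disjoint_union_left]
      constructor
      · rw [Finset.disjoint_left]; intro x hx hx1
        exact (memQ3 x (hT1'sub hx1)).2.2.1 hx
      · rw [Finset.disjoint_left]; intro x hx hx1
        exact (memQ3 x (hT1'sub hx1)).2.1 (memQ1 x (hT1sub hx)).1
    rw [Finset.card_union_of_disjoint d2, Finset.card_union_of_disjoint d1,
      hT1card, hT1'card]
    omega
  · -- card C = n
    have hT2'Q3 : T2' ⊆ Q3 := hT2'sub.trans Finset.sdiff_subset
    have d1 : Disjoint C₀ T2 := by
      rw [Finset.disjoint_left]; intro x hx hx1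
      exact (memQ2 x (hT2sub hx1)).2.2.2 hx
    have d2 : Disjoint (C₀ ∪ T2) T2' := by
      rw [Finset.disjoint_union_left]
      constructor
      · rw [Finset.disjoint_left]; intro x hx hx1
        exact (memQ3 x (hT2'Q3 hx1)).2.2.2 hx
      · rw [Finset.disjoint_left]; intro x hx hx1
        exact (memQ3 x (hT2'Q3 hx1)).1 (memQ2 x (hT2sub hx)).1
    rw [Finset.card_union_of_disjoint d2, Finset.card_union_of_disjoint d1,
      hT2card, hT2'card]
    omega




theorem stmt9 {U : Type*} [DecidableEq U] [Fintype U] (t : ℕ)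
    (hU : 5 * t ≤ Fintype.card U)
    (A : Fin 5 → Finset U)
    (hcard : ∀ i, (A i).card ≤ 2 * t)
    (hdisj : ∀ i, A i ∩ A (i + 2) = ∅) :
    ∃ A' : Fin 5 → Finset U,
      (∀ i, A i ⊆ A' i) ∧ (∀ i, (A' i).card ≤ 2 * t) ∧
      (∀ i, A' i ∩ A' (i + 2) = ∅) ∧
      ∃ i : Fin 5, (A' i).card = 2 * t ∧ (A' (i + 2)).card = 2 * t := by
  classical
  have hDisj : ∀ j : Fin 5, Disjoint (A j) (A (j+2)) := fun j =>
    Finset.disjoint_iff_inter_eq_empty.mpr (hdisj j)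
  have hd : ∀ (j : Fin 5) (x : U), x ∈ A j → x ∈ A (j+2) → False := fun j x h1 h2 =>
    Finset.disjoint_left.mp (hDisj j) h1 h2
  set u : ℕ := Fintype.card U with hu
  set a : Fin 5 → ℕ := fun j => (A j).card with ha
  set f : Fin 5 → ℕ := fun j => (A j ∪ A (j+1)).card with hf
  set g : Fin 5 → ℕ := fun j => (A j ∩ A (j+1)).card with hg
  have H1 : ∀ j, a j ≤ 2*t := hcard
  have H2 : ∀ j, a j + a (j+1) = f j + g j := fun j =>
    (Finset.card_union_add_card_inter _ _).symm
  have H4 : ∀ j, g j + g (j+1) ≤ a (j+1) := by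
    intro j
    obtain ⟨⟨n11, -⟩, -⟩ := fin5_norm j
    have hdj : Disjoint (A j ∩ A (j+1)) (A (j+1) ∩ A (j+1+1)) := by
      rw [n11]
      exact Disjoint.mono Finset.inter_subset_left Finset.inter_subset_right (hDisj j)
    have hsub : (A j ∩ A (j+1)) ∪ (A (j+1) ∩ A (j+1+1)) ⊆ A (j+1) :=
      Finset.union_subset Finset.inter_subset_right Finset.inter_subset_left
    calc g j + g (j+1) = ((A j ∩ A (j+1)) ∪ (A (j+1) ∩ A (j+1+1))).card :=
          (Finset.card_union_of_disjoint hdj).symm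
      _ ≤ a (j+1) := Finset.card_le_card hsub
  have H3 : ∀ j, f j + f (j+2) ≤ u + g (j+1) := by
    intro j
    obtain ⟨⟨n11, n21, -⟩, ⟨n12, -, n32, -⟩, -, -⟩ := fin5_norm j
    have hsub : (A j ∪ A (j+1)) ∩ (A (j+2) ∪ A (j+2+1)) ⊆ A (j+1) ∩ A (j+1+1) := by
      rw [n21, n11]
      intro x hx
      simp only [Finset.mem_inter, Finset.mem_union] at hx ⊢
      obtain ⟨hx1 | hx1, hx2 | hx2⟩ := hx
      · exact absurd hx2 (fun h => hd j x hx1 h)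
      · exact absurd hx2 (fun h => hd (j+3) x h (by rwa [n32]))
      · exact ⟨hx1, hx2⟩
      · exact absurd hx2 (fun h => hd (j+1) x hx1 (by rw [n12]; exact h))
    calc f j + f (j+2)
        = ((A j ∪ A (j+1)) ∪ (A (j+2) ∪ A (j+2+1))).card
          + ((A j ∪ A (j+1)) ∩ (A (j+2) ∪ A (j+2+1))).card :=
          (Finset.card_union_add_card_inter _ _).symm
      _ ≤ u + g (j+1) := by
          gcongr
          · exact le_trans (Finset.card_le_univ _) (le_of_eq Finset.card_univ)
          · exact Finset.card_le_card hsub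
  obtain ⟨i, hgi, hfi1, hfi4⟩ := sel_main H1 H2 H3 H4 hU
  obtain ⟨⟨n11,n21,n31,n41⟩, ⟨n12,n22,n32,n42⟩, ⟨n13,n23,n33,n43⟩, ⟨n14,n24,n34,n44⟩⟩ :=
    fin5_norm i
  have hBD : Disjoint (A (i+2)) (A i) := (hDisj i).symm
  have hCE : Disjoint (A (i+4)) (A (i+1)) := by have := hDisj (i+4); rwa [n42] at this
  have hBC : Disjoint (A (i+2)) (A (i+4)) := by have := hDisj (i+2); rwa [n22] at this
  have hx1 : 2*t + (A i ∪ A (i+4)).card ≤ Fintype.card U := by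
    have : f (i+4) = (A (i+4) ∪ A i).card := by simp only [hf]; rw [n41]
    rw [Finset.union_comm]
    omega
  have hx2 : 2*t + (A (i+1) ∪ A (i+2)).card ≤ Fintype.card U := by
    have : f (i+1) = (A (i+1) ∪ A (i+2)).card := by simp only [hf]; rw [n11]
    omega
  have hx3 : 2*t + 2*t + (A i ∩ A (i+1)).card ≤ Fintype.card U := by
    have : g i = (A i ∩ A (i+1)).card := by simp only [hg]
    omega
  obtain ⟨B, C, hBsub, hCsub, hBCd, hBDd, hCEd, hBcard, hCcard⟩ :=
    extend_pair (2*t) (A (i+2)) (A (i+4)) (A i) (A (i+1)) hBD hCE hBC (hcard _) (hcard _)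
      hx1 hx2 hx3
  have NE : ∀ q : Fin 5, q ≠ q+2 ∧ q ≠ q+4 ∧ q+1 ≠ q+2 ∧ q+1 ≠ q+4 ∧ q+3 ≠ q+2 ∧
      q+3 ≠ q+4 ∧ q+4 ≠ q+2 ∧ q+2 ≠ q+4 := by decide
  obtain ⟨ne1, ne2, ne3, ne4, ne5, ne6, ne7, ne8⟩ := NE i
  have cover : ∀ p q : Fin 5, p = q ∨ p = q+1 ∨ p = q+2 ∨ p = q+3 ∨ p = q+4 := by decide
  refine ⟨fun j => if j = i+2 then B else if j = i+4 then C else A j, ?_, ?_, ?_, ?_⟩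
  · intro j
    dsimp only
    by_cases e1 : j = i+2
    · subst e1; rw [if_pos rfl]; exact hBsub
    · rw [if_neg e1]
      by_cases e2 : j = i+4
      · subst e2; rw [if_pos rfl]; exact hCsub
      · rw [if_neg e2]
  · intro j
    dsimp only
    by_cases e1 : j = i+2
    · subst e1; rw [if_pos rfl, hBcard]
    · rw [if_neg e1]
      by_cases e2 : j = i+4
      · subst e2; rw [if_pos rfl, hCcard]
      · rw [if_neg e2]; exact hcard j
  · intro j
    dsimp only
    rcases cover j i with rfl | rfl | rfl | rfl | rfl
    · rw [if_neg ne1, if_neg ne2, if_pos rfl]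
      exact Finset.disjoint_iff_inter_eq_empty.mp hBDd.symm
    · rw [if_neg ne3, if_neg ne4, n12, if_neg ne5, if_neg ne6]
      have := hdisj (i+1); rwa [n12] at this
    · rw [if_pos rfl, n22, if_neg ne7, if_pos rfl]
      exact Finset.disjoint_iff_inter_eq_empty.mp hBCd
    · rw [if_neg ne5, if_neg ne6, n32, if_neg ne1, if_neg ne2]
      have := hdisj (i+3); rwa [n32] at this
    · rw [if_neg ne7, if_pos rfl, n42, if_neg ne3, if_neg ne4]
      exact Finset.disjoint_iff_inter_eq_empty.mp hCEd
  · refine ⟨i+2, ?_, ?_⟩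
    · dsimp only; rw [if_pos rfl]; exact hBcard
    · dsimp only; rw [n22, if_neg ne7, if_pos rfl]; exact hCcard
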